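/- Let τ = (1 + √5)/2 and for k ∈ ℤ define λ_k = (⌈k/τ⌉ + kτ)/τ². Then: (i) the map k ↦ λ_k is strictly increasing with λ_0 = 0; (ii) { λ_k : k ∈ ℤ } = Σ^{[0,τ²)} = { a + bτ : a, b ∈ ℤ, a − b/τ ∈ [0, τ²) }; (iii) for every k ∈ ℤ, λ_{k+1} − λ_k ∈ {1, 1/τ}. -/

import Mathlib

open MeasureTheory Set Filter

noncomputable section

/-- The golden mean `τ = (1 + √5)/2`. -/
def tau : ℝ := (1 + Real.sqrt 5) / 2

/-- The cut-and-project model set `Σ^Ω = { a + bτ : a, b ∈ ℤ, a - b/τ ∈ Ω }`. -/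
def SigmaSet (Ω : Set ℝ) : Set ℝ :=
  {x | ∃ a b : ℤ, x = (a : ℝ) + (b : ℝ) * tau ∧ (a : ℝ) - (b : ℝ) / tau ∈ Ω}

/-- The increasing enumeration `λ_k = (⌈k/τ⌉ + kτ)/τ²` of the rescaled Fibonacci
chain `Σ^{[0,τ²)}`. -/
def fibChain (k : ℤ) : ℝ := ((⌈(k : ℝ) / tau⌉ : ℝ) + (k : ℝ) * tau) / tau ^ 2

lemma tau_sq : tau ^ 2 = tau + 1 := by
  have h5 : Real.sqrt 5 ^ 2 = 5 := Real.sq_sqrt (by norm_num)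
  unfold tau; nlinarith [h5]

lemma tau_gt_one : (1:ℝ) < tau := by
  have h5 : Real.sqrt 5 ^ 2 = 5 := Real.sq_sqrt (by norm_num)
  have : (1:ℝ) < Real.sqrt 5 := by nlinarith [Real.sqrt_nonneg 5]
  unfold tau; linarith

lemma tau_pos : (0:ℝ) < tau := lt_trans one_pos tau_gt_one

lemma fib_eq (k : ℤ) :
    fibChain k = ((2*⌈(k:ℝ)/tau⌉ - k : ℤ) : ℝ) + ((k - ⌈(k:ℝ)/tau⌉ : ℤ) : ℝ) * tau := by
  have ht := tau_sq
  unfold fibChain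
  push_cast
  rw [div_eq_iff (pow_ne_zero 2 tau_pos.ne')]
  linear_combination (-(((k:ℝ) - (⌈(k:ℝ)/tau⌉:ℝ)) * tau + (⌈(k:ℝ)/tau⌉:ℝ))) * ht

lemma ceil_succ (k : ℤ) :
    ⌈((k:ℝ)+1)/tau⌉ = ⌈(k:ℝ)/tau⌉ ∨ ⌈((k:ℝ)+1)/tau⌉ = ⌈(k:ℝ)/tau⌉ + 1 := by
  have hp := tau_pos
  have h1 := tau_gt_one
  have hle : ⌈(k:ℝ)/tau⌉ ≤ ⌈((k:ℝ)+1)/tau⌉ := by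
    apply Int.ceil_le_ceil
    gcongr
    linarith
  have hlt : ⌈((k:ℝ)+1)/tau⌉ ≤ ⌈(k:ℝ)/tau⌉ + 1 := by
    rw [Int.ceil_le]
    have h2 : (k:ℝ)/tau ≤ (⌈(k:ℝ)/tau⌉ : ℝ) := Int.le_ceil _
    have h3 : 1/tau ≤ 1 := by rw [div_le_one hp]; linarith
    have h4 : ((k:ℝ)+1)/tau = (k:ℝ)/tau + 1/tau := by ring
    push_cast
    rw [h4]; linarith
  omega

lemma gap (k : ℤ) :
    fibChain (k+1) - fibChain k = 1 ∨ fibChain (k+1) - fibChain k = 1/tau := by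
  have ht := tau_sq
  have hp := tau_pos
  unfold fibChain
  push_cast
  rcases ceil_succ k with h | h <;> rw [h]
  · right
    push_cast
    rw [div_sub_div_same, div_eq_div_iff (by positivity) hp.ne']
    ring
  · left
    push_cast
    rw [div_sub_div_same, div_eq_one_iff_eq (pow_ne_zero 2 hp.ne')]
    linear_combination -ht

/-- the sequence `λ_k = (⌈k/τ⌉ + kτ)/τ²` is strictly increasing with
`λ_0 = 0`, its range is the model set `Σ^{[0,τ²)}`, and consecutive gaps are `1`
or `1/τ`. -/
theorem statement9 :
    (StrictMono fibChain ∧ fibChain 0 = 0) ∧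
    Set.range fibChain = SigmaSet (Set.Ico 0 (tau ^ 2)) ∧
    (∀ k : ℤ, fibChain (k + 1) - fibChain k = 1 ∨
      fibChain (k + 1) - fibChain k = 1 / tau) := by
  have ht := tau_sq
  have hp := tau_pos
  refine ⟨⟨?_, ?_⟩, ?_, gap⟩
  · apply strictMono_int_of_lt_succ
    intro k
    have hg := gap k
    have h1 : (0:ℝ) < 1/tau := by positivity
    rcases hg with h | h <;> linarith
  · simp [fibChain]
  · ext x
    simp only [Set.mem_range, SigmaSet, Set.mem_setOf_eq, Set.mem_Ico]
    constructor
    · rintro ⟨k, rfl⟩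
      refine ⟨2*⌈(k:ℝ)/tau⌉ - k, k - ⌈(k:ℝ)/tau⌉, fib_eq k, ?_⟩
      set c : ℝ := (⌈(k:ℝ)/tau⌉ : ℝ) with hc
      have h1 : (k:ℝ) ≤ c * tau := (div_le_iff₀ hp).mp (Int.le_ceil _)
      have h2 : (c - 1) * tau < (k:ℝ) := by
        have := Int.ceil_lt_add_one ((k:ℝ)/tau)
        rw [← lt_div_iff₀ hp]
        rw [← hc] at this
        linarith
      have hs : ((2*⌈(k:ℝ)/tau⌉ - k : ℤ):ℝ) - ((k - ⌈(k:ℝ)/tau⌉ : ℤ):ℝ)/tau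
          = (c * tau - (k:ℝ)) * tau := by
        push_cast
        rw [← hc]
        field_simp
        linear_combination ((k:ℝ) - c*(tau+1)) * ht
      rw [hs]
      constructor
      · nlinarith
      · nlinarith
    · rintro ⟨a, b, rfl, h0, h1⟩
      refine ⟨a + 2*b, ?_⟩
      have key : ((a:ℝ)+b) - ((a:ℝ)+2*b)/tau = ((a:ℝ) - (b:ℝ)/tau)/tau^2 := by
        field_simp
        linear_combination ((a:ℝ) + (b:ℝ) - (b:ℝ)*tau + ((a:ℝ)+(b:ℝ))*(tau^2-1) + (-((a:ℝ)+(b:ℝ))*tau^2 + ((a:ℝ)+2*(b:ℝ))*tau - (b:ℝ))) * ht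
      have hq0 : (0:ℝ) ≤ ((a:ℝ) - (b:ℝ)/tau)/tau^2 := div_nonneg h0 (by positivity)
      have hq1 : ((a:ℝ) - (b:ℝ)/tau)/tau^2 < 1 := (div_lt_one (by positivity)).mpr h1
      have hceil : ⌈((a + 2*b : ℤ):ℝ)/tau⌉ = a + b := by
        rw [Int.ceil_eq_iff]
        push_cast
        push_cast at key
        constructor <;> linarith
      unfold fibChain
      rw [hceil]
      push_cast
      rw [div_eq_iff (pow_ne_zero 2 hp.ne')]
      linear_combination (-((b:ℝ)*tau + (a:ℝ) + (b:ℝ))) * ht
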